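/- arXiv:2212.01621 — 2 statements merged into one kernel-verified Lean document; each statement's English description precedes it below -/
import Mathlib

section
/- Information gain inequality: let X be an ℝ^p-valued random vector, Z an ℝ^r-valued random vector, and Y = (Y_1,…,Y_q) an ℝ^q-valued random vector with non-degenerate components, all defined on a common probability space. Then T(Y|X) ≤ T(Y|(X,Z)). -/
open MeasureTheory ProbabilityTheory

/-- Azadkia–Chatterjee's rank correlation `ξ(Y | m)` of a real random variable `Y`
given a sub-σ-algebra `m`. -/
noncomputable def xiSigma {Ω : Type*} (m : MeasurableSpace Ω) [MeasurableSpace Ω]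
    (P : Measure Ω) (Y : Ω → ℝ) : ℝ :=
  (∫ y, variance (P[Set.indicator {ω | y ≤ Y ω} (fun _ => (1 : ℝ)) | m]) P ∂(P.map Y)) /
  (∫ y, variance (Set.indicator {ω | y ≤ Y ω} (fun _ => (1 : ℝ))) P ∂(P.map Y))

/-- Azadkia–Chatterjee's rank correlation `ξ(Y | X)`: conditioning on the σ-algebra
generated by the random vector `X`. -/
noncomputable def xi {Ω α : Type*} [MeasurableSpace Ω] [MeasurableSpace α]
    (P : Measure Ω) (Y : Ω → ℝ) (X : Ω → α) : ℝ :=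
  xiSigma (MeasurableSpace.comap X inferInstance) P Y

/-- The σ-algebra generated by the response variables with index `< i`,
i.e. by `(Y_1, …, Y_{i-1})`; for `i = 0` it is the trivial σ-algebra `⊥`,
so that `xiSigma (sigmaPast Y 0) P (Y 0) = ξ(Y_1 | ∅) = 0`. -/
def sigmaPast {Ω : Type*} {q : ℕ} (Y : Fin q → Ω → ℝ) (i : Fin q) :
    MeasurableSpace Ω :=
  ⨆ j : Fin q, ⨆ _ : j < i, MeasurableSpace.comap (Y j) inferInstance

/-- The extension `T(Y | X)` of Azadkia–Chatterjee's rank correlation to a vector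
`Y = (Y_1, …, Y_q)` of response variables, given the predictor vector `X`:
`T(Y|X) = 1 − (q − ∑_i ξ(Y_i | (X,Y_{i−1},…,Y_1))) / (q − ∑_i ξ(Y_i | (Y_{i−1},…,Y_1)))`. -/
noncomputable def T {Ω α : Type*} [MeasurableSpace Ω] [MeasurableSpace α]
    (P : Measure Ω) {q : ℕ} (Y : Fin q → Ω → ℝ) (X : Ω → α) : ℝ :=
  1 - ((q : ℝ) - ∑ i, xiSigma (MeasurableSpace.comap X inferInstance ⊔ sigmaPast Y i) P (Y i)) /
      ((q : ℝ) - ∑ i, xiSigma (sigmaPast Y i) P (Y i))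

/-- A real random variable is non-degenerate if it is not almost surely constant. -/
def Nondegenerate {Ω : Type*} [MeasurableSpace Ω] (P : Measure Ω) (Y : Ω → ℝ) : Prop :=
  ¬ ∃ c : ℝ, ∀ᵐ ω ∂P, Y ω = c



set_option linter.unusedSectionVars false
section AuxCondexp

variable {Ω : Type*} {m : MeasurableSpace Ω} [m0 : MeasurableSpace Ω] {P : Measure Ω}
  [IsProbabilityMeasure P]

private lemma condexp_norm_le_one' (hm : m ≤ m0) {f : Ω → ℝ}
    (hfi : Integrable f P) (hf : ∀ᵐ ω ∂P, ‖f ω‖ ≤ 1) :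
    ∀ᵐ ω ∂P, ‖(P[f|m]) ω‖ ≤ 1 := by
  have hub : f ≤ᵐ[P] fun _ => (1:ℝ) :=
    hf.mono fun ω h => (abs_le.1 (by simpa [Real.norm_eq_abs] using h)).2
  have hlb : (fun _ => (-1:ℝ)) ≤ᵐ[P] f :=
    hf.mono fun ω h => (abs_le.1 (by simpa [Real.norm_eq_abs] using h)).1
  have h1 := condExp_mono (m := m) hfi (integrable_const (1:ℝ)) hub
  have h2 := condExp_mono (m := m) (integrable_const (-1:ℝ)) hfi hlb
  rw [condExp_const hm] at h1 h2
  filter_upwards [h1, h2] with ω hu hl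
  rw [Real.norm_eq_abs, abs_le]
  exact ⟨hl, hu⟩

private lemma condexp_asm (hm : m ≤ m0) (f : Ω → ℝ) :
    AEStronglyMeasurable (P[f|m]) P := by
  have h1 : StronglyMeasurable[m] (P[f|m]) := stronglyMeasurable_condExp
  have h2 : StronglyMeasurable[m0] (P[f|m]) := h1.mono hm
  exact h2.aestronglyMeasurable

private lemma integral_sq_condexp_le' (hm : m ≤ m0) {f : Ω → ℝ}
    (hfm : AEStronglyMeasurable f P) (hf : ∀ᵐ ω ∂P, ‖f ω‖ ≤ 1) :
    ∫ ω, (P[f|m]) ω ^ 2 ∂P ≤ ∫ ω, f ω ^ 2 ∂P := by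
  have hfi : Integrable f P := (integrable_const (1:ℝ)).mono' hfm hf
  set k := P[f|m] with hk
  have hkm : AEStronglyMeasurable k P := condexp_asm hm f
  have hkb : ∀ᵐ ω ∂P, ‖k ω‖ ≤ 1 := condexp_norm_le_one' hm hfi hf
  have hmul : ∀ {u v : Ω → ℝ}, AEStronglyMeasurable u P → AEStronglyMeasurable v P →
      (∀ᵐ ω ∂P, ‖u ω‖ ≤ 1) → (∀ᵐ ω ∂P, ‖v ω‖ ≤ 1) → Integrable (fun ω => u ω * v ω) P := by
    intro u v hu hv hub hvb
    refine (integrable_const (1:ℝ)).mono' (hu.mul hv) ?_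
    filter_upwards [hub, hvb] with ω h1 h2
    calc ‖u ω * v ω‖ = ‖u ω‖ * ‖v ω‖ := norm_mul _ _
      _ ≤ 1 * 1 := mul_le_mul h1 h2 (norm_nonneg _) zero_le_one
      _ = 1 := one_mul 1
  have hff : Integrable (fun ω => f ω * f ω) P := hmul hfm hfm hf hf
  have hkk : Integrable (fun ω => k ω * k ω) P := hmul hkm hkm hkb hkb
  have hkf : Integrable (fun ω => k ω * f ω) P := hmul hkm hfm hkb hf
  have hpull : P[k * f|m] =ᵐ[P] k * P[f|m] :=
    condExp_mul_of_stronglyMeasurable_left stronglyMeasurable_condExp hkf hfi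
  have hint_eq : ∫ ω, k ω * f ω ∂P = ∫ ω, k ω * k ω ∂P := by
    have h1 : ∫ ω, (P[k * f|m]) ω ∂P = ∫ ω, (k * f) ω ∂P := integral_condExp hm
    have h2 : ∫ ω, (P[k * f|m]) ω ∂P = ∫ ω, (k * (P[f|m])) ω ∂P := integral_congr_ae
      (hpull.mono fun ω h => by simp [h])
    simpa [Pi.mul_apply, ← hk] using h1.symm.trans h2
  have hexp : ∫ ω, (f ω - k ω)^2 ∂P
      = ∫ ω, f ω * f ω ∂P - ∫ ω, k ω * k ω ∂P := by
    have hI : Integrable (fun ω => 2 * (k ω * f ω) - k ω * k ω) P := (hkf.const_mul 2).sub hkk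
    calc ∫ ω, (f ω - k ω)^2 ∂P
        = ∫ ω, (f ω * f ω - (2 * (k ω * f ω) - k ω * k ω)) ∂P := by
          congr 1; funext ω; ring
      _ = ∫ ω, f ω * f ω ∂P - ∫ ω, (2 * (k ω * f ω) - k ω * k ω) ∂P := integral_sub hff hI
      _ = ∫ ω, f ω * f ω ∂P - (∫ ω, 2 * (k ω * f ω) ∂P - ∫ ω, k ω * k ω ∂P) := by
          rw [integral_sub (hkf.const_mul 2) hkk]
      _ = ∫ ω, f ω * f ω ∂P - ∫ ω, k ω * k ω ∂P := by
          rw [integral_const_mul, hint_eq]; ring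
  have hpos : 0 ≤ ∫ ω, (f ω - k ω)^2 ∂P := integral_nonneg fun ω => sq_nonneg _
  have e1 : ∫ ω, k ω ^ 2 ∂P = ∫ ω, k ω * k ω ∂P := by simp_rw [pow_two]
  have e2 : ∫ ω, f ω ^ 2 ∂P = ∫ ω, f ω * f ω ∂P := by simp_rw [pow_two]
  rw [e1, e2]
  linarith

private lemma variance_condexp_eq' (hm : m ≤ m0) {f : Ω → ℝ}
    (hfm : AEStronglyMeasurable f P) (hf : ∀ᵐ ω ∂P, ‖f ω‖ ≤ 1) :
    variance (P[f|m]) P = (∫ ω, (P[f|m]) ω ^ 2 ∂P) - (∫ ω, f ω ∂P) ^ 2 := by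
  have hfi : Integrable f P := (integrable_const (1:ℝ)).mono' hfm hf
  have hkm : AEStronglyMeasurable (P[f|m]) P := condexp_asm hm f
  have hkb : ∀ᵐ ω ∂P, ‖(P[f|m]) ω‖ ≤ 1 := condexp_norm_le_one' hm hfi hf
  have hk2 : MemLp (P[f|m]) 2 P := MemLp.of_bound hkm 1 hkb
  rw [variance_eq_sub hk2, integral_condExp hm]
  simp [Pi.pow_apply]

private lemma variance_eq' {f : Ω → ℝ}
    (hfm : AEStronglyMeasurable f P) (hf : ∀ᵐ ω ∂P, ‖f ω‖ ≤ 1) :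
    variance f P = (∫ ω, f ω ^ 2 ∂P) - (∫ ω, f ω ∂P) ^ 2 := by
  have hf2 : MemLp f 2 P := MemLp.of_bound hfm 1 hf
  rw [variance_eq_sub hf2]
  simp [Pi.pow_apply]

end AuxCondexp
set_option linter.unusedSectionVars false
set_option linter.unusedVariables false
section YLayer

variable {Ω : Type*} {m : MeasurableSpace Ω} [m0 : MeasurableSpace Ω] {P : Measure Ω}
  [IsProbabilityMeasure P]

private lemma gmem {Y : Ω → ℝ} (y : ℝ) (ω : Ω) :
    Set.indicator {ω | y ≤ Y ω} (fun _ => (1:ℝ)) ω ∈ Set.Icc (0:ℝ) 1 := by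
  by_cases h : ω ∈ {ω | y ≤ Y ω} <;> simp [Set.indicator_apply, h]

private lemma gnorm {Y : Ω → ℝ} (y : ℝ) (ω : Ω) :
    ‖Set.indicator {ω | y ≤ Y ω} (fun _ => (1:ℝ)) ω‖ ≤ 1 := by
  rw [Real.norm_eq_abs, abs_le]
  exact ⟨le_trans (by norm_num) (gmem y ω).1, (gmem y ω).2⟩

private lemma gmeas {Y : Ω → ℝ} (hY : Measurable Y) (y : ℝ) :
    Measurable (Set.indicator {ω | y ≤ Y ω} (fun _ => (1:ℝ))) :=
  measurable_const.indicator (measurableSet_le measurable_const hY)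

private lemma gint {Y : Ω → ℝ} (hY : Measurable Y) (y : ℝ) :
    Integrable (Set.indicator {ω | y ≤ Y ω} (fun _ => (1:ℝ))) P :=
  (integrable_const (1:ℝ)).mono' (gmeas hY y).aestronglyMeasurable (ae_of_all _ (gnorm y))

private lemma ganti {Y : Ω → ℝ} {y y' : ℝ} (h : y ≤ y') (ω : Ω) :
    Set.indicator {ω | y' ≤ Y ω} (fun _ => (1:ℝ)) ω ≤
      Set.indicator {ω | y ≤ Y ω} (fun _ => (1:ℝ)) ω :=
  Set.indicator_le_indicator_of_subset (fun ω' hω' => le_trans h hω')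
    (fun _ => zero_le_one) ω

private lemma gsq {Y : Ω → ℝ} (y : ℝ) (ω : Ω) :
    Set.indicator {ω | y ≤ Y ω} (fun _ => (1:ℝ)) ω ^ 2
      = Set.indicator {ω | y ≤ Y ω} (fun _ => (1:ℝ)) ω := by
  by_cases h : ω ∈ {ω | y ≤ Y ω} <;> simp [Set.indicator_apply, h]

private lemma sqint {k : Ω → ℝ} (hkm : AEStronglyMeasurable k P)
    (hkb : ∀ᵐ ω ∂P, ‖k ω‖ ≤ 1) : Integrable (fun ω => k ω ^ 2) P := by
  refine (integrable_const (1:ℝ)).mono'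
    ((hkm.mul hkm).congr (ae_of_all _ fun ω => (pow_two _).symm)) ?_
  filter_upwards [hkb] with ω h
  rw [norm_pow]
  calc ‖k ω‖ ^ 2 ≤ 1 ^ 2 := pow_le_pow_left₀ (norm_nonneg _) h 2
    _ = 1 := one_pow 2

/-- `y ↦ ∫ (E[g_y | m])²` is antitone. -/
private lemma F_anti {Y : Ω → ℝ} (hY : Measurable Y) (hm : m ≤ m0) :
    Antitone (fun y => ∫ ω, (P[Set.indicator {ω | y ≤ Y ω} (fun _ => (1:ℝ))|m]) ω ^ 2 ∂P) := by
  intro y y' h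
  have hmono : P[Set.indicator {ω | y' ≤ Y ω} (fun _ => (1:ℝ))|m]
      ≤ᵐ[P] P[Set.indicator {ω | y ≤ Y ω} (fun _ => (1:ℝ))|m] :=
    condExp_mono (gint hY y') (gint hY y) (ae_of_all _ (ganti h))
  have hnn : 0 ≤ᵐ[P] P[Set.indicator {ω | y' ≤ Y ω} (fun _ => (1:ℝ))|m] :=
    condExp_nonneg (ae_of_all _ fun ω => (gmem y' ω).1)
  refine integral_mono_ae
    (sqint (condexp_asm hm _) (condexp_norm_le_one' hm (gint hY y') (ae_of_all _ (gnorm y'))))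
    (sqint (condexp_asm hm _) (condexp_norm_le_one' hm (gint hY y) (ae_of_all _ (gnorm y)))) ?_
  filter_upwards [hmono, hnn] with ω h1 h2
  exact pow_le_pow_left₀ h2 h1 2

private lemma mu_anti {Y : Ω → ℝ} (hY : Measurable Y) :
    Antitone (fun y => ∫ ω, Set.indicator {ω | y ≤ Y ω} (fun _ => (1:ℝ)) ω ∂P) := by
  intro y y' h
  exact integral_mono (gint hY y') (gint hY y) (ganti h)

private lemma F_le_one {Y : Ω → ℝ} (hY : Measurable Y) (hm : m ≤ m0)
    (y : ℝ) : ∫ ω, (P[Set.indicator {ω | y ≤ Y ω} (fun _ => (1:ℝ))|m]) ω ^ 2 ∂P ≤ 1 := by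
  have hb := condexp_norm_le_one' (P := P) hm (gint hY y) (ae_of_all _ (gnorm y))
  calc ∫ ω, (P[Set.indicator {ω | y ≤ Y ω} (fun _ => (1:ℝ))|m]) ω ^ 2 ∂P
      ≤ ∫ _ω, (1:ℝ) ∂P := by
        refine integral_mono_ae (sqint (condexp_asm hm _) hb) (integrable_const 1) ?_
        filter_upwards [hb] with ω h
        calc (P[Set.indicator {ω | y ≤ Y ω} (fun _ => (1:ℝ))|m]) ω ^ 2
            ≤ ‖(P[Set.indicator {ω | y ≤ Y ω} (fun _ => (1:ℝ))|m]) ω‖ ^ 2 := by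
              rw [Real.norm_eq_abs]; exact sq_le_sq' (neg_abs_le _) (le_abs_self _)
          _ ≤ 1 ^ 2 := pow_le_pow_left₀ (norm_nonneg _) h 2
          _ = 1 := one_pow 2
    _ = 1 := by simp

/-- The numerator integrand of `xiSigma` expressed through antitone functions. -/
private lemma var_num_eq {Y : Ω → ℝ} (hY : Measurable Y) (hm : m ≤ m0)
    (y : ℝ) :
    variance (P[Set.indicator {ω | y ≤ Y ω} (fun _ => (1:ℝ))|m]) P
      = (∫ ω, (P[Set.indicator {ω | y ≤ Y ω} (fun _ => (1:ℝ))|m]) ω ^ 2 ∂P)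
        - (∫ ω, Set.indicator {ω | y ≤ Y ω} (fun _ => (1:ℝ)) ω ∂P) ^ 2 :=
  variance_condexp_eq' hm (gmeas hY y).aestronglyMeasurable (ae_of_all _ (gnorm y))

private lemma var_den_eq {Y : Ω → ℝ} (hY : Measurable Y) (y : ℝ) :
    variance (Set.indicator {ω | y ≤ Y ω} (fun _ => (1:ℝ))) P
      = (∫ ω, Set.indicator {ω | y ≤ Y ω} (fun _ => (1:ℝ)) ω ∂P)
        - (∫ ω, Set.indicator {ω | y ≤ Y ω} (fun _ => (1:ℝ)) ω ∂P) ^ 2 := by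
  rw [variance_eq' (gmeas hY y).aestronglyMeasurable (ae_of_all _ (gnorm y))]
  congr 1
  exact integral_congr_ae (ae_of_all _ fun ω => gsq y ω)

private lemma num_integrable {Y : Ω → ℝ} (hY : Measurable Y) (hm : m ≤ m0) :
    Integrable (fun y => variance (P[Set.indicator {ω | y ≤ Y ω} (fun _ => (1:ℝ))|m]) P)
      (P.map Y) := by
  haveI : IsProbabilityMeasure (P.map Y) := Measure.isProbabilityMeasure_map hY.aemeasurable
  have hmeas : Measurable
      (fun y => variance (P[Set.indicator {ω | y ≤ Y ω} (fun _ => (1:ℝ))|m]) P) := by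
    have heq : (fun y => variance (P[Set.indicator {ω | y ≤ Y ω} (fun _ => (1:ℝ))|m]) P)
        = fun y => (∫ ω, (P[Set.indicator {ω | y ≤ Y ω} (fun _ => (1:ℝ))|m]) ω ^ 2 ∂P)
          - (∫ ω, Set.indicator {ω | y ≤ Y ω} (fun _ => (1:ℝ)) ω ∂P) ^ 2 :=
      funext fun y => var_num_eq hY hm y
    rw [heq]
    exact ((F_anti hY hm).measurable).sub (((mu_anti hY).measurable).pow_const 2)
  refine (integrable_const (1:ℝ)).mono' hmeas.aestronglyMeasurable (ae_of_all _ fun y => ?_)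
  rw [Real.norm_eq_abs, abs_of_nonneg (variance_nonneg _ _), var_num_eq hY hm y]
  have h1 := F_le_one (P := P) hY hm y
  have h2 : (0:ℝ) ≤ (∫ ω, Set.indicator {ω | y ≤ Y ω} (fun _ => (1:ℝ)) ω ∂P) ^ 2 := sq_nonneg _
  linarith

private lemma den_integrable {Y : Ω → ℝ} (hY : Measurable Y) :
    Integrable (fun y => variance (Set.indicator {ω | y ≤ Y ω} (fun _ => (1:ℝ))) P)
      (P.map Y) := by
  haveI : IsProbabilityMeasure (P.map Y) := Measure.isProbabilityMeasure_map hY.aemeasurable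
  have hmeas : Measurable
      (fun y => variance (Set.indicator {ω | y ≤ Y ω} (fun _ => (1:ℝ))) P) := by
    have heq : (fun y => variance (Set.indicator {ω | y ≤ Y ω} (fun _ => (1:ℝ))) P)
        = fun y => (∫ ω, Set.indicator {ω | y ≤ Y ω} (fun _ => (1:ℝ)) ω ∂P)
          - (∫ ω, Set.indicator {ω | y ≤ Y ω} (fun _ => (1:ℝ)) ω ∂P) ^ 2 :=
      funext fun y => var_den_eq hY y
    rw [heq]
    exact ((mu_anti hY).measurable).sub (((mu_anti hY).measurable).pow_const 2)
  refine (integrable_const (1:ℝ)).mono' hmeas.aestronglyMeasurable (ae_of_all _ fun y => ?_)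
  rw [Real.norm_eq_abs, abs_of_nonneg (variance_nonneg _ _), var_den_eq hY y]
  have h1 : ∫ ω, Set.indicator {ω | y ≤ Y ω} (fun _ => (1:ℝ)) ω ∂P ≤ 1 := by
    calc ∫ ω, Set.indicator {ω | y ≤ Y ω} (fun _ => (1:ℝ)) ω ∂P
        ≤ ∫ _ω, (1:ℝ) ∂P := integral_mono (gint hY y) (integrable_const 1)
          (fun ω => (gmem y ω).2)
      _ = 1 := by simp
  have h2 : (0:ℝ) ≤ (∫ ω, Set.indicator {ω | y ≤ Y ω} (fun _ => (1:ℝ)) ω ∂P) ^ 2 := sq_nonneg _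
  linarith

end YLayer
set_option linter.unusedSectionVars false
section XiLayer

variable {Ω : Type*} {m m₁ m₂ : MeasurableSpace Ω} [m0 : MeasurableSpace Ω] {P : Measure Ω}
  [IsProbabilityMeasure P]

private lemma var_num_mono {Y : Ω → ℝ} (hY : Measurable Y) (h12 : m₁ ≤ m₂) (hm2 : m₂ ≤ m0)
    (y : ℝ) :
    variance (P[Set.indicator {ω | y ≤ Y ω} (fun _ => (1:ℝ))|m₁]) P
      ≤ variance (P[Set.indicator {ω | y ≤ Y ω} (fun _ => (1:ℝ))|m₂]) P := by
  have hm1 : m₁ ≤ m0 := h12.trans hm2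
  rw [var_num_eq hY hm1 y, var_num_eq hY hm2 y]
  apply sub_le_sub_right
  have htower : P[Set.indicator {ω | y ≤ Y ω} (fun _ => (1:ℝ))|m₁]
      =ᵐ[P] P[P[Set.indicator {ω | y ≤ Y ω} (fun _ => (1:ℝ))|m₂]|m₁] :=
    (condExp_condExp_of_le h12 hm2).symm
  have e : ∫ ω, (P[Set.indicator {ω | y ≤ Y ω} (fun _ => (1:ℝ))|m₁]) ω ^ 2 ∂P
      = ∫ ω, (P[P[Set.indicator {ω | y ≤ Y ω} (fun _ => (1:ℝ))|m₂]|m₁]) ω ^ 2 ∂P :=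
    integral_congr_ae (htower.mono fun ω hω => by dsimp only; rw [hω])
  rw [e]
  exact integral_sq_condexp_le' hm1 (condexp_asm hm2 _)
    (condexp_norm_le_one' hm2 (gint hY y) (ae_of_all _ (gnorm y)))

private lemma var_num_le_den {Y : Ω → ℝ} (hY : Measurable Y) (hm : m ≤ m0) (y : ℝ) :
    variance (P[Set.indicator {ω | y ≤ Y ω} (fun _ => (1:ℝ))|m]) P
      ≤ variance (Set.indicator {ω | y ≤ Y ω} (fun _ => (1:ℝ))) P := by
  rw [var_num_eq hY hm y, var_den_eq hY y]
  apply sub_le_sub_right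
  calc ∫ ω, (P[Set.indicator {ω | y ≤ Y ω} (fun _ => (1:ℝ))|m]) ω ^ 2 ∂P
      ≤ ∫ ω, Set.indicator {ω | y ≤ Y ω} (fun _ => (1:ℝ)) ω ^ 2 ∂P :=
        integral_sq_condexp_le' hm (gmeas hY y).aestronglyMeasurable (ae_of_all _ (gnorm y))
    _ = ∫ ω, Set.indicator {ω | y ≤ Y ω} (fun _ => (1:ℝ)) ω ∂P :=
        integral_congr_ae (ae_of_all _ fun ω => gsq y ω)

private lemma xiSigma_mono' {Y : Ω → ℝ} (hY : Measurable Y) (h12 : m₁ ≤ m₂) (hm2 : m₂ ≤ m0) :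
    xiSigma m₁ P Y ≤ xiSigma m₂ P Y := by
  have hm1 : m₁ ≤ m0 := h12.trans hm2
  unfold xiSigma
  have hD : 0 ≤ ∫ y, variance (Set.indicator {ω | y ≤ Y ω} (fun _ => (1:ℝ))) P ∂(P.map Y) :=
    integral_nonneg fun y => variance_nonneg _ _
  rcases hD.eq_or_lt with h | h
  · rw [← h, div_zero, div_zero]
  · have hnum : (∫ y, variance (P[Set.indicator {ω | y ≤ Y ω} (fun _ => (1:ℝ))|m₁]) P ∂(P.map Y))
        ≤ ∫ y, variance (P[Set.indicator {ω | y ≤ Y ω} (fun _ => (1:ℝ))|m₂]) P ∂(P.map Y) :=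
      integral_mono (num_integrable hY hm1) (num_integrable hY hm2)
        (fun y => var_num_mono hY h12 hm2 y)
    gcongr

private lemma xiSigma_le_one' {Y : Ω → ℝ} (hY : Measurable Y) (hm : m ≤ m0) :
    xiSigma m P Y ≤ 1 := by
  unfold xiSigma
  have hD : 0 ≤ ∫ y, variance (Set.indicator {ω | y ≤ Y ω} (fun _ => (1:ℝ))) P ∂(P.map Y) :=
    integral_nonneg fun y => variance_nonneg _ _
  rcases hD.eq_or_lt with h | h
  · rw [← h, div_zero]; exact zero_le_one
  · rw [div_le_one h]
    exact integral_mono (num_integrable hY hm) (den_integrable hY)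
      (fun y => var_num_le_den hY hm y)

end XiLayer

theorem T_information_gain_inequality
    {Ω : Type*} [MeasurableSpace Ω] (P : Measure Ω) [IsProbabilityMeasure P]
    {p q r : ℕ} (X : Ω → (Fin p → ℝ)) (Z : Ω → (Fin r → ℝ)) (Y : Fin q → Ω → ℝ)
    (hX : Measurable X) (hZ : Measurable Z) (hY : ∀ i, Measurable (Y i))
    (hnd : ∀ i, Nondegenerate P (Y i)) :
    T P Y X ≤ T P Y (fun ω => (X ω, Z ω)) := by
  classical
  unfold T
  have hXZ : Measurable (fun ω => (X ω, Z ω)) := hX.prodMk hZ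
  have hpast_le : ∀ i, sigmaPast Y i ≤ ‹MeasurableSpace Ω› := fun i =>
    iSup_le fun j => iSup_le fun _ => (hY j).comap_le
  have hcle : MeasurableSpace.comap X inferInstance
      ≤ MeasurableSpace.comap (fun ω => (X ω, Z ω)) inferInstance := by
    have h1 : MeasurableSpace.comap X (inferInstance : MeasurableSpace (Fin p → ℝ))
        = MeasurableSpace.comap (fun ω => (X ω, Z ω))
            (MeasurableSpace.comap Prod.fst inferInstance) :=
      (MeasurableSpace.comap_comp (f := Prod.fst) (g := fun ω => (X ω, Z ω))).symm
    rw [h1]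
    exact MeasurableSpace.comap_mono measurable_fst.comap_le
  have hsum_le : (∑ i, xiSigma (sigmaPast Y i) P (Y i)) ≤ (q : ℝ) := by
    calc (∑ i, xiSigma (sigmaPast Y i) P (Y i)) ≤ ∑ _i : Fin q, (1:ℝ) :=
        Finset.sum_le_sum fun i _ => xiSigma_le_one' (hY i) (hpast_le i)
      _ = q := by simp
  have hD : 0 ≤ (q : ℝ) - ∑ i, xiSigma (sigmaPast Y i) P (Y i) := sub_nonneg.2 hsum_le
  have hnum : ∀ i : Fin q,
      xiSigma (MeasurableSpace.comap X inferInstance ⊔ sigmaPast Y i) P (Y i)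
        ≤ xiSigma (MeasurableSpace.comap (fun ω => (X ω, Z ω)) inferInstance ⊔ sigmaPast Y i)
            P (Y i) := fun i =>
    xiSigma_mono' (hY i) (sup_le_sup_right hcle _) (sup_le hXZ.comap_le (hpast_le i))
  have hsum : (∑ i, xiSigma (MeasurableSpace.comap X inferInstance ⊔ sigmaPast Y i) P (Y i))
      ≤ ∑ i, xiSigma (MeasurableSpace.comap (fun ω => (X ω, Z ω)) inferInstance
          ⊔ sigmaPast Y i) P (Y i) :=
    Finset.sum_le_sum fun i _ => hnum i
  rcases hD.eq_or_lt with h | h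
  · rw [← h, div_zero, div_zero]
  · have hfrac : ((q : ℝ) - ∑ i, xiSigma (MeasurableSpace.comap (fun ω => (X ω, Z ω))
        inferInstance ⊔ sigmaPast Y i) P (Y i))
          / ((q : ℝ) - ∑ i, xiSigma (sigmaPast Y i) P (Y i))
        ≤ ((q : ℝ) - ∑ i, xiSigma (MeasurableSpace.comap X inferInstance ⊔ sigmaPast Y i) P (Y i))
          / ((q : ℝ) - ∑ i, xiSigma (sigmaPast Y i) P (Y i)) := by
      gcongr
    linarith
end

section
/- Self-equitability: let X be an ℝ^p-valued random vector, Y = (Y_1,…,Y_q) an ℝ^q-valued random vector with non-degenerate components, all defined on a common probability space, and let h : ℝ^p → ℝ^r be a measurable function such that Y and X are conditionally independent given h(X). Then T(Y|h(X)) = T(Y|X). -/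
open MeasureTheory ProbabilityTheory

noncomputable def ind {Ω : Type*} (s : Set Ω) : Ω → ℝ := s.indicator fun _ => (1:ℝ)

section helpers
variable {Ω : Type*} [mΩ : MeasurableSpace Ω] {μ : Measure Ω} [IsProbabilityMeasure μ]

omit mΩ in
lemma ind_mul_apply (s t : Set Ω) (x : Ω) : ind s x * ind t x = ind (s ∩ t) x := by
  by_cases hs : x ∈ s <;> by_cases ht : x ∈ t <;>
    simp [ind, Set.indicator_apply, hs, ht, Set.mem_inter_iff]

omit mΩ in
lemma ind_bound (s : Set Ω) (x : Ω) : ‖ind s x‖ ≤ 1 := by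
  by_cases hs : x ∈ s <;> simp [ind, Set.indicator_apply, hs]

omit mΩ in
lemma norm_mul_le_one' {a b : ℝ} (ha : ‖a‖ ≤ 1) (hb : ‖b‖ ≤ 1) : ‖a * b‖ ≤ 1 := by
  rw [norm_mul]
  calc ‖a‖ * ‖b‖ ≤ 1 * 1 := by
        exact mul_le_mul ha hb (norm_nonneg b) zero_le_one
    _ = 1 := one_mul 1

lemma ind_stronglyMeasurable {m : MeasurableSpace Ω} {s : Set Ω} (hs : MeasurableSet[m] s) :
    StronglyMeasurable[m] (ind s) := stronglyMeasurable_const.indicator hs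

omit [IsProbabilityMeasure μ] in
lemma ind_integrable {s : Set Ω} (hs : MeasurableSet[mΩ] s) [IsFiniteMeasure μ] :
    Integrable (ind s) μ := (integrable_const (1:ℝ)).indicator hs

omit [IsProbabilityMeasure μ] in
lemma setIntegral_eq_integral_ind_mul {s : Set Ω} (hs : MeasurableSet[mΩ] s) (f : Ω → ℝ) :
    ∫ x in s, f x ∂μ = ∫ x, ind s x * f x ∂μ := by
  rw [← integral_indicator hs]
  congr 1; funext x
  by_cases h : x ∈ s <;> simp [ind, Set.indicator_apply, h]

lemma integral_mul_condexp {m : MeasurableSpace Ω} (hm : m ≤ mΩ) {φ f : Ω → ℝ}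
    (hφ : StronglyMeasurable[m] φ) (hφb : ∀ᵐ x ∂μ, ‖φ x‖ ≤ 1) (hf : Integrable f μ) :
    ∫ x, φ x * f x ∂μ = ∫ x, φ x * (μ[f|m]) x ∂μ := by
  have hφm : AEStronglyMeasurable[mΩ] φ μ := (hφ.mono hm).aestronglyMeasurable
  have h1 : Integrable (φ * f) μ := hf.bdd_mul hφm hφb
  have h2 := condExp_mul_of_stronglyMeasurable_left hφ h1 hf
  calc ∫ x, φ x * f x ∂μ = ∫ x, (μ[φ * f|m]) x ∂μ := (integral_condExp hm).symm
    _ = ∫ x, φ x * (μ[f|m]) x ∂μ := integral_congr_ae h2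

lemma condexp_ind_bound {m : MeasurableSpace Ω} (s : Set Ω) :
    ∀ᵐ x ∂μ, ‖(μ[ind s|m]) x‖ ≤ 1 := by
  have hb : ∀ᵐ x ∂μ, |ind s x| ≤ ((1 : NNReal) : ℝ) := ae_of_all _ fun x => by
    simpa [Real.norm_eq_abs] using ind_bound s x
  filter_upwards [ae_bdd_condExp_of_ae_bdd hb] with x hx
  simpa [Real.norm_eq_abs] using hx
end helpers

section pisys
variable {Ω : Type*} [mΩ : MeasurableSpace Ω] {μ : Measure Ω} [IsProbabilityMeasure μ]

lemma step_compl {t : Set Ω} (ht : MeasurableSet[mΩ] t) {f g : Ω → ℝ}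
    (hf : Integrable f μ) (hg : Integrable g μ)
    (huniv : ∫ x, f x ∂μ = ∫ x, g x ∂μ)
    (hteq : ∫ x in t, f x ∂μ = ∫ x in t, g x ∂μ) :
    ∫ x in tᶜ, f x ∂μ = ∫ x in tᶜ, g x ∂μ := by
  have h1 := integral_add_compl ht hf
  have h2 := integral_add_compl ht hg
  linarith

lemma step_union {F : ℕ → Set Ω} (hF : ∀ i, MeasurableSet[mΩ] (F i))
    (hdisj : Pairwise (Function.onFun Disjoint F)) {f g : Ω → ℝ}
    (hf : Integrable f μ) (hg : Integrable g μ)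
    (heq : ∀ i, ∫ x in F i, f x ∂μ = ∫ x in F i, g x ∂μ) :
    ∫ x in ⋃ i, F i, f x ∂μ = ∫ x in ⋃ i, F i, g x ∂μ := by
  rw [integral_iUnion hF hdisj hf.integrableOn, integral_iUnion hF hdisj hg.integrableOn]
  exact tsum_congr heq

omit mΩ in
lemma sup_eq_generateFrom_inter (m₁ m₂ : MeasurableSpace Ω) :
    m₁ ⊔ m₂ = MeasurableSpace.generateFrom
      {s | ∃ t₁ t₂, MeasurableSet[m₁] t₁ ∧ MeasurableSet[m₂] t₂ ∧ s = t₁ ∩ t₂} := by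
  refine le_antisymm (sup_le ?_ ?_) (MeasurableSpace.generateFrom_le ?_)
  · intro t ht
    exact MeasurableSpace.measurableSet_generateFrom ⟨t, Set.univ, ht, MeasurableSet.univ,
      (Set.inter_univ t).symm⟩
  · intro t ht
    exact MeasurableSpace.measurableSet_generateFrom ⟨Set.univ, t, MeasurableSet.univ, ht,
      (Set.univ_inter t).symm⟩
  · rintro s ⟨t₁, t₂, ht₁, ht₂, rfl⟩
    exact ((le_sup_left : m₁ ≤ m₁ ⊔ m₂) _ ht₁).inter ((le_sup_right : m₂ ≤ m₁ ⊔ m₂) _ ht₂)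

omit mΩ in
lemma isPiSystem_inter_sets (m₁ m₂ : MeasurableSpace Ω) :
    IsPiSystem {s : Set Ω | ∃ t₁ t₂, MeasurableSet[m₁] t₁ ∧ MeasurableSet[m₂] t₂ ∧ s = t₁ ∩ t₂} := by
  rintro s ⟨s₁, s₂, hs₁, hs₂, rfl⟩ t ⟨t₁, t₂, ht₁, ht₂, rfl⟩ -
  exact ⟨s₁ ∩ t₁, s₂ ∩ t₂, hs₁.inter ht₁, hs₂.inter ht₂, by
    ext x; simp [Set.mem_inter_iff]; tauto⟩

lemma setIntegral_eq_on_sup {m₁ m₂ : MeasurableSpace Ω} (h₁ : m₁ ≤ mΩ) (h₂ : m₂ ≤ mΩ)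
    {f g : Ω → ℝ} (hf : Integrable f μ) (hg : Integrable g μ)
    (h : ∀ t₁ t₂, MeasurableSet[m₁] t₁ → MeasurableSet[m₂] t₂ →
      ∫ x in t₁ ∩ t₂, f x ∂μ = ∫ x in t₁ ∩ t₂, g x ∂μ)
    {s : Set Ω} (hs : MeasurableSet[m₁ ⊔ m₂] s) :
    ∫ x in s, f x ∂μ = ∫ x in s, g x ∂μ := by
  have hle : m₁ ⊔ m₂ ≤ mΩ := sup_le h₁ h₂
  have huniv : ∫ x, f x ∂μ = ∫ x, g x ∂μ := by
    simpa using h Set.univ Set.univ MeasurableSet.univ MeasurableSet.univ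
  refine MeasurableSpace.induction_on_inter (m := m₁ ⊔ m₂)
    (C := fun s _ => ∫ x in s, f x ∂μ = ∫ x in s, g x ∂μ)
    (sup_eq_generateFrom_inter m₁ m₂) (isPiSystem_inter_sets m₁ m₂)
    (by simp) ?_ ?_ ?_ s hs
  · rintro t ⟨t₁, t₂, ht₁, ht₂, rfl⟩
    exact h t₁ t₂ ht₁ ht₂
  · intro t htm hteq
    exact step_compl (mΩ := mΩ) (hle _ htm) hf hg huniv hteq
  · intro F hdisj hFm hFeq
    exact step_union (mΩ := mΩ) (fun i => hle _ (hFm i)) hdisj hf hg hFeq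
end pisys

section key
variable {Ω : Type*} [mΩ : MeasurableSpace Ω] {μ : Measure Ω} [IsProbabilityMeasure μ]

/-- Step D: under conditional independence of `m₁` and `m₂` given `m'`,
for `B ∈ m₂` and `mS ≤ m₁`, `μ[1_B | m' ⊔ mS] = μ[1_B | m']` a.e. -/
lemma condexp_ind_sup_past {m' m₁ m₂ mS : MeasurableSpace Ω}
    (hm' : m' ≤ mΩ) (h₁ : m₁ ≤ mΩ) (h₂ : m₂ ≤ mΩ) (hS : mS ≤ m₁)
    (hCI : ∀ t1 t2, MeasurableSet[m₁] t1 → MeasurableSet[m₂] t2 →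
      (μ[ind (t1 ∩ t2)|m']) =ᵐ[μ] (μ[ind t1|m']) * (μ[ind t2|m']))
    {B : Set Ω} (hB : MeasurableSet[m₂] B) :
    (μ[ind B|m' ⊔ mS]) =ᵐ[μ] (μ[ind B|m']) := by
  have hSΩ : mS ≤ mΩ := hS.trans h₁
  have hE : m' ⊔ mS ≤ mΩ := sup_le hm' hSΩ
  have hBm : MeasurableSet[mΩ] B := h₂ _ hB
  have hintB : Integrable (ind B) μ := ind_integrable (mΩ := mΩ) hBm
  refine (ae_eq_condExp_of_forall_setIntegral_eq hE hintB
    (fun s _ _ => integrable_condExp.restrict) (fun s hsm _ => ?_)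
    (stronglyMeasurable_condExp.mono le_sup_left).aestronglyMeasurable).symm
  refine setIntegral_eq_on_sup (mΩ := mΩ) hm' hSΩ integrable_condExp hintB ?_ hsm
  intro E C hE' hC'
  have hEm : MeasurableSet[mΩ] E := hm' _ hE'
  have hCm : MeasurableSet[mΩ] C := hSΩ _ hC'
  have hsmE : StronglyMeasurable[m'] (fun x => ind E x * (μ[ind B|m']) x) :=
    (ind_stronglyMeasurable hE').mul stronglyMeasurable_condExp
  have hbE : ∀ᵐ x ∂μ, ‖ind E x * (μ[ind B|m']) x‖ ≤ 1 := by
    filter_upwards [condexp_ind_bound (mΩ := mΩ) (μ := μ) (m := m') B] with x hx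
    exact norm_mul_le_one' (ind_bound E x) hx
  calc ∫ x in E ∩ C, (μ[ind B|m']) x ∂μ
      = ∫ x, ind (E ∩ C) x * (μ[ind B|m']) x ∂μ :=
        setIntegral_eq_integral_ind_mul (mΩ := mΩ) (hEm.inter hCm) _
    _ = ∫ x, (fun y => ind E y * (μ[ind B|m']) y) x * ind C x ∂μ := by
        congr 1; funext x
        rw [← ind_mul_apply]; ring
    _ = ∫ x, (fun y => ind E y * (μ[ind B|m']) y) x * (μ[ind C|m']) x ∂μ :=
        integral_mul_condexp (mΩ := mΩ) hm' hsmE hbE (ind_integrable (mΩ := mΩ) hCm)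
    _ = ∫ x, ind E x * (μ[ind (C ∩ B)|m']) x ∂μ := by
        refine integral_congr_ae ?_
        filter_upwards [hCI C B (hS _ hC') hB] with x hx
        simp only [Pi.mul_apply] at hx
        rw [hx]; ring
    _ = ∫ x, ind E x * ind (C ∩ B) x ∂μ :=
        (integral_mul_condexp (mΩ := mΩ) hm' (ind_stronglyMeasurable hE')
          (ae_of_all _ fun x => ind_bound E x) (ind_integrable (mΩ := mΩ) (hCm.inter hBm))).symm
    _ = ∫ x in E ∩ C, ind B x ∂μ := by
        rw [setIntegral_eq_integral_ind_mul (mΩ := mΩ) (hEm.inter hCm)]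
        congr 1; funext x
        rw [ind_mul_apply, ind_mul_apply, Set.inter_assoc]
end key

section key2
variable {Ω : Type*} [mΩ : MeasurableSpace Ω] {μ : Measure Ω} [IsProbabilityMeasure μ]

/-- Main step: under conditional independence of `m₁` and `m₂` given `m' ≤ m₂`,
for `A ∈ m₁` and `mS ≤ m₁`, `μ[1_A | m₂ ⊔ mS] = μ[1_A | m' ⊔ mS]` a.e. -/
lemma condexp_ind_sup_eq {m' m₁ m₂ mS : MeasurableSpace Ω}
    (hm' : m' ≤ mΩ) (h₁ : m₁ ≤ mΩ) (h₂ : m₂ ≤ mΩ) (hS : mS ≤ m₁) (hm'2 : m' ≤ m₂)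
    (hCI : ∀ t1 t2, MeasurableSet[m₁] t1 → MeasurableSet[m₂] t2 →
      (μ[ind (t1 ∩ t2)|m']) =ᵐ[μ] (μ[ind t1|m']) * (μ[ind t2|m']))
    {A : Set Ω} (hA : MeasurableSet[m₁] A) :
    (μ[ind A|m₂ ⊔ mS]) =ᵐ[μ] (μ[ind A|m' ⊔ mS]) := by
  have hSΩ : mS ≤ mΩ := hS.trans h₁
  have hEle : m' ⊔ mS ≤ mΩ := sup_le hm' hSΩ
  have hFle : m₂ ⊔ mS ≤ mΩ := sup_le h₂ hSΩ
  have hEF : m' ⊔ mS ≤ m₂ ⊔ mS := sup_le_sup_right hm'2 mS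
  have hAm : MeasurableSet[mΩ] A := h₁ _ hA
  have hintA : Integrable (ind A) μ := ind_integrable (mΩ := mΩ) hAm
  refine (ae_eq_condExp_of_forall_setIntegral_eq hFle hintA
    (fun s _ _ => integrable_condExp.restrict) (fun s hsm _ => ?_)
    ((stronglyMeasurable_condExp.mono hEF).aestronglyMeasurable)).symm
  refine setIntegral_eq_on_sup (mΩ := mΩ) h₂ hSΩ integrable_condExp hintA ?_ hsm
  intro B C hB hC'
  have hBm : MeasurableSet[mΩ] B := h₂ _ hB
  have hCm : MeasurableSet[mΩ] C := hSΩ _ hC'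
  have hCE : MeasurableSet[m' ⊔ mS] C := (le_sup_right : mS ≤ m' ⊔ mS) _ hC'
  have hD : (μ[ind B|m' ⊔ mS]) =ᵐ[μ] (μ[ind B|m']) :=
    condexp_ind_sup_past (mΩ := mΩ) hm' h₁ h₂ hS hCI hB
  -- bounded strongly measurable multipliers
  have hsm1 : StronglyMeasurable[m' ⊔ mS] (fun x => ind C x * (μ[ind A|m' ⊔ mS]) x) :=
    (ind_stronglyMeasurable hCE).mul stronglyMeasurable_condExp
  have hb1 : ∀ᵐ x ∂μ, ‖ind C x * (μ[ind A|m' ⊔ mS]) x‖ ≤ 1 := by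
    filter_upwards [condexp_ind_bound (mΩ := mΩ) (μ := μ) (m := m' ⊔ mS) A] with x hx
    exact norm_mul_le_one' (ind_bound C x) hx
  have hsm2 : StronglyMeasurable[m' ⊔ mS] (fun x => ind C x * (μ[ind B|m']) x) :=
    (ind_stronglyMeasurable hCE).mul (stronglyMeasurable_condExp.mono le_sup_left)
  have hb2 : ∀ᵐ x ∂μ, ‖ind C x * (μ[ind B|m']) x‖ ≤ 1 := by
    filter_upwards [condexp_ind_bound (mΩ := mΩ) (μ := μ) (m := m') B] with x hx
    exact norm_mul_le_one' (ind_bound C x) hx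
  have hbψ := condexp_ind_bound (mΩ := mΩ) (μ := μ) (m := m') B
  calc ∫ x in B ∩ C, (μ[ind A|m' ⊔ mS]) x ∂μ
      = ∫ x, ind (B ∩ C) x * (μ[ind A|m' ⊔ mS]) x ∂μ :=
        setIntegral_eq_integral_ind_mul (mΩ := mΩ) (hBm.inter hCm) _
    _ = ∫ x, (fun y => ind C y * (μ[ind A|m' ⊔ mS]) y) x * ind B x ∂μ := by
        congr 1; funext x
        rw [← ind_mul_apply]; ring
    _ = ∫ x, (fun y => ind C y * (μ[ind A|m' ⊔ mS]) y) x * (μ[ind B|m' ⊔ mS]) x ∂μ :=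
        integral_mul_condexp (mΩ := mΩ) hEle hsm1 hb1 (ind_integrable (mΩ := mΩ) hBm)
    _ = ∫ x, (fun y => ind C y * (μ[ind B|m']) y) x * (μ[ind A|m' ⊔ mS]) x ∂μ := by
        refine integral_congr_ae ?_
        filter_upwards [hD] with x hx
        show ind C x * (μ[ind A|m' ⊔ mS]) x * (μ[ind B|m' ⊔ mS]) x
          = ind C x * (μ[ind B|m']) x * (μ[ind A|m' ⊔ mS]) x
        rw [hx]; ring
    _ = ∫ x, (fun y => ind C y * (μ[ind B|m']) y) x * ind A x ∂μ :=
        (integral_mul_condexp (mΩ := mΩ) hEle hsm2 hb2 hintA).symm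
    _ = ∫ x, (μ[ind B|m']) x * ind (C ∩ A) x ∂μ := by
        congr 1; funext x
        rw [← ind_mul_apply]; ring
    _ = ∫ x, (μ[ind B|m']) x * (μ[ind (C ∩ A)|m']) x ∂μ :=
        integral_mul_condexp (mΩ := mΩ) hm' stronglyMeasurable_condExp hbψ
          (ind_integrable (mΩ := mΩ) (hCm.inter hAm))
    _ = ∫ x, (μ[ind ((C ∩ A) ∩ B)|m']) x ∂μ := by
        refine integral_congr_ae ?_
        filter_upwards [hCI (C ∩ A) B ((hS _ hC').inter hA) hB] with x hx
        simp only [Pi.mul_apply] at hx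
        rw [hx]; ring
    _ = ∫ x, ind ((C ∩ A) ∩ B) x ∂μ := integral_condExp hm'
    _ = ∫ x in B ∩ C, ind A x ∂μ := by
        rw [setIntegral_eq_integral_ind_mul (mΩ := mΩ) (hBm.inter hCm)]
        have hset : (C ∩ A) ∩ B = (B ∩ C) ∩ A := by
          ext x; simp [Set.mem_inter_iff]; tauto
        congr 1; funext x
        rw [ind_mul_apply, hset]
end key2

section assemble
variable {Ω : Type*} [mΩ : MeasurableSpace Ω] {μ : Measure Ω} [IsProbabilityMeasure μ]

omit [IsProbabilityMeasure μ] in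
lemma my_variance_congr {f g : Ω → ℝ} (h : f =ᵐ[μ] g) : variance f μ = variance g μ := by
  unfold ProbabilityTheory.variance ProbabilityTheory.evariance
  rw [integral_congr_ae h]
  refine congrArg ENNReal.toReal (lintegral_congr_ae (h.mono fun x hx => ?_))
  dsimp only
  rw [hx]
end assemble

theorem T_self_equitability
    {Ω : Type*} [MeasurableSpace Ω] [StandardBorelSpace Ω] [Nonempty Ω]
    (P : Measure Ω) [IsProbabilityMeasure P]
    {p q r : ℕ} (X : Ω → (Fin p → ℝ)) (Y : Fin q → Ω → ℝ)
    (h : (Fin p → ℝ) → (Fin r → ℝ))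
    (hX : Measurable X) (hY : ∀ i, Measurable (Y i)) (hh : Measurable h)
    (hnd : ∀ i, Nondegenerate P (Y i))
    (hCI : CondIndepFun (MeasurableSpace.comap (fun ω => h (X ω)) inferInstance)
      (Measurable.comap_le (hh.comp hX)) (fun ω => fun i => Y i ω) X P) :
    T P Y (fun ω => h (X ω)) = T P Y X := by
  have hYvec : Measurable (fun ω => fun i => Y i ω) := measurable_pi_lambda _ hY
  have hYle : MeasurableSpace.comap (fun ω => fun i => Y i ω)
      (inferInstance : MeasurableSpace (Fin q → ℝ)) ≤ _ := hYvec.comap_le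
  have hXle : MeasurableSpace.comap X
      (inferInstance : MeasurableSpace (Fin p → ℝ)) ≤ _ := hX.comap_le
  have hm' : MeasurableSpace.comap (fun ω => h (X ω))
      (inferInstance : MeasurableSpace (Fin r → ℝ)) ≤ _ := (hh.comp hX).comap_le
  have hm'X : MeasurableSpace.comap (fun ω => h (X ω))
        (inferInstance : MeasurableSpace (Fin r → ℝ)) ≤
      MeasurableSpace.comap X (inferInstance : MeasurableSpace (Fin p → ℝ)) := by
    have heq : (fun ω => h (X ω)) = h ∘ X := rfl
    rw [heq, ← MeasurableSpace.comap_comp]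
    exact MeasurableSpace.comap_mono hh.comap_le
  rw [condIndepFun_iff_condIndep] at hCI
  rw [condIndep_iff _ _ _ _ hYle hXle] at hCI
  have hCI' : ∀ t1 t2, MeasurableSet[MeasurableSpace.comap (fun ω => fun i => Y i ω)
        (inferInstance : MeasurableSpace (Fin q → ℝ))] t1 →
      MeasurableSet[MeasurableSpace.comap X (inferInstance : MeasurableSpace (Fin p → ℝ))] t2 →
      (P[ind (t1 ∩ t2)|MeasurableSpace.comap (fun ω => h (X ω))
        (inferInstance : MeasurableSpace (Fin r → ℝ))]) =ᵐ[P]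
      (P[ind t1|MeasurableSpace.comap (fun ω => h (X ω)) inferInstance]) *
      (P[ind t2|MeasurableSpace.comap (fun ω => h (X ω)) inferInstance]) := hCI
  have hcomapY : ∀ j : Fin q, MeasurableSpace.comap (Y j)
      (inferInstance : MeasurableSpace ℝ) ≤ MeasurableSpace.comap (fun ω => fun i => Y i ω)
      (inferInstance : MeasurableSpace (Fin q → ℝ)) := by
    intro j
    have : MeasurableSpace.comap (Y j) (inferInstance : MeasurableSpace ℝ) =
        MeasurableSpace.comap (fun ω => fun i => Y i ω)
          (MeasurableSpace.comap (fun v : Fin q → ℝ => v j) inferInstance) := by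
      rw [MeasurableSpace.comap_comp]; rfl
    rw [this]
    exact MeasurableSpace.comap_mono (measurable_pi_apply j).comap_le
  have hSle : ∀ i, sigmaPast Y i ≤ MeasurableSpace.comap (fun ω => fun i => Y i ω)
      (inferInstance : MeasurableSpace (Fin q → ℝ)) := fun i =>
    iSup_le fun j => iSup_le fun _ => hcomapY j
  have hxi : ∀ i, xiSigma (MeasurableSpace.comap (fun ω => h (X ω)) inferInstance
        ⊔ sigmaPast Y i) P (Y i)
      = xiSigma (MeasurableSpace.comap X inferInstance ⊔ sigmaPast Y i) P (Y i) := by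
    intro i
    have hint : ∀ y : ℝ,
        (P[Set.indicator {ω | y ≤ Y i ω} (fun _ => (1 : ℝ))|MeasurableSpace.comap X
            inferInstance ⊔ sigmaPast Y i]) =ᵐ[P]
        (P[Set.indicator {ω | y ≤ Y i ω} (fun _ => (1 : ℝ))|MeasurableSpace.comap
            (fun ω => h (X ω)) inferInstance ⊔ sigmaPast Y i]) := by
      intro y
      have hA : MeasurableSet[MeasurableSpace.comap (fun ω => fun i => Y i ω)
          (inferInstance : MeasurableSpace (Fin q → ℝ))] {ω | y ≤ Y i ω} := by
        refine hcomapY i _ ⟨Set.Ici y, measurableSet_Ici, rfl⟩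
      exact condexp_ind_sup_eq hm' hYle hXle (hSle i) hm'X hCI' hA
    unfold xiSigma
    congr 1
    have : (fun y => variance (P[Set.indicator {ω | y ≤ Y i ω}
          (fun _ => (1 : ℝ))|MeasurableSpace.comap (fun ω => h (X ω)) inferInstance
          ⊔ sigmaPast Y i]) P)
        = (fun y => variance (P[Set.indicator {ω | y ≤ Y i ω}
          (fun _ => (1 : ℝ))|MeasurableSpace.comap X inferInstance ⊔ sigmaPast Y i]) P) :=
      funext fun y => (my_variance_congr (hint y)).symm
    rw [this]
  unfold T
  rw [show (∑ i, xiSigma (MeasurableSpace.comap (fun ω => h (X ω)) inferInstance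
      ⊔ sigmaPast Y i) P (Y i))
    = ∑ i, xiSigma (MeasurableSpace.comap X inferInstance ⊔ sigmaPast Y i) P (Y i) from
    Finset.sum_congr rfl fun i _ => hxi i]
end
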